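/- Let μ be a finite Borel measure on ℝ. Then ∫_{[0,1]×(0,1]} μ([x−y, x+y])²/y² dx dy ≤ Σ_{n=0}^∞ 2^{n+2} · ∫₀¹ μ([x − 2^{−n}, x + 2^{−n}])² dx. -/

import Mathlib

open MeasureTheory

lemma meas_icc (μ : Measure ℝ) [IsFiniteMeasure μ] (c : ℝ) (hc : 0 ≤ c) :
    Measurable fun x : ℝ => μ (Set.Icc (x - c) (x + c)) := by
  have hF : Measurable fun b : ℝ => μ (Set.Iic b) :=
    Monotone.measurable (fun a b hab => measure_mono (Set.Iic_subset_Iic.2 hab))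
  have hG : Measurable fun a : ℝ => μ (Set.Iio a) :=
    Monotone.measurable (fun a b hab => measure_mono (Set.Iio_subset_Iio hab))
  have key : ∀ x : ℝ, μ (Set.Icc (x - c) (x + c)) = μ (Set.Iic (x + c)) - μ (Set.Iio (x - c)) := by
    intro x
    have heq : Set.Icc (x - c) (x + c) = Set.Iic (x + c) \ Set.Iio (x - c) :=
      by ext z; simp [and_comm]
    rw [heq, measure_diff (Set.Iio_subset_Iic_self.trans (Set.Iic_subset_Iic.2 (by linarith)))
      measurableSet_Iio.nullMeasurableSet (measure_ne_top μ _)]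
  simp only [key]
  exact (hF.comp (measurable_add_const c)).sub (hG.comp (measurable_sub_const c))

theorem stmt13 (μ : Measure ℝ) [IsFiniteMeasure μ] :
    ∫⁻ p in Set.Icc (0 : ℝ) 1 ×ˢ Set.Ioc (0 : ℝ) 1,
        (μ (Set.Icc (p.1 - p.2) (p.1 + p.2))) ^ 2 / ENNReal.ofReal (p.2 ^ 2) ≤
      ∑' n : ℕ, 2 ^ (n + 2) *
        ∫⁻ x in Set.Icc (0 : ℝ) 1,
          (μ (Set.Icc (x - ((2 : ℝ) ^ n)⁻¹) (x + ((2 : ℝ) ^ n)⁻¹))) ^ 2 := by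
  set A : Set ℝ := Set.Icc (0 : ℝ) 1 with hA
  set T : ℕ → Set ℝ := fun n => Set.Ioc (((2 : ℝ) ^ (n + 1))⁻¹) (((2 : ℝ) ^ n)⁻¹) with hT
  set f : ℝ × ℝ → ENNReal := fun p =>
    (μ (Set.Icc (p.1 - p.2) (p.1 + p.2))) ^ 2 / ENNReal.ofReal (p.2 ^ 2) with hf
  set h : ℕ → ℝ → ENNReal := fun n x =>
    (μ (Set.Icc (x - ((2 : ℝ) ^ n)⁻¹) (x + ((2 : ℝ) ^ n)⁻¹))) ^ 2 with hh
  -- covering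
  have hcover : Set.Ioc (0 : ℝ) 1 ⊆ ⋃ n, T n := by
    intro y hy
    have hex : ∃ k : ℕ, ((2 : ℝ) ^ (k + 1))⁻¹ < y := by
      obtain ⟨m, hm⟩ := exists_pow_lt_of_lt_one hy.1 (by norm_num : (1 / 2 : ℝ) < 1)
      refine ⟨m, lt_of_le_of_lt ?_ (by simpa [inv_pow, one_div] using hm)⟩
      rw [inv_le_inv₀ (by positivity) (by positivity)]
      exact pow_le_pow_right₀ one_le_two (Nat.le_succ m)
    refine Set.mem_iUnion.2 ⟨Nat.find hex, Nat.find_spec hex, ?_⟩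
    rcases Nat.eq_zero_or_pos (Nat.find hex) with h0 | hpos
    · rw [h0]; simpa using hy.2
    · have hmin := Nat.find_min hex (Nat.sub_lt hpos one_pos)
      have heq1 : Nat.find hex - 1 + 1 = Nat.find hex := by omega
      rw [heq1] at hmin
      exact not_lt.1 hmin
  -- main estimate per piece
  have hpiece : ∀ n : ℕ, ∫⁻ p in A ×ˢ T n, f p ≤ 2 ^ (n + 2) * ∫⁻ x in A, h n x := by
    intro n
    have h2n : (0 : ℝ) < ((2 : ℝ) ^ n)⁻¹ := by positivity
    have hmeas : Measurable fun x : ℝ =>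
        ENNReal.ofReal ((4 : ℝ) ^ (n + 1)) * h n x := by
      exact (((meas_icc μ (((2 : ℝ) ^ n)⁻¹) h2n.le)).pow_const 2).const_mul _
    have hbound : ∀ p ∈ A ×ˢ T n, f p ≤ ENNReal.ofReal ((4 : ℝ) ^ (n + 1)) * h n p.1 := by
      rintro ⟨x, y⟩ ⟨-, hy1, hy2⟩
      have hy0 : (0 : ℝ) < y := lt_trans (by positivity) hy1
      rw [hf]
      dsimp only
      rw [ENNReal.div_le_iff (by simp [pow_pos hy0, hy0.ne']) ENNReal.ofReal_ne_top]
      have hnum : (μ (Set.Icc (x - y) (x + y))) ^ 2 ≤ h n x := by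
        apply pow_le_pow_left' (measure_mono (Set.Icc_subset_Icc (by linarith) (by linarith)))
      have hone : (1 : ENNReal) ≤ ENNReal.ofReal ((4 : ℝ) ^ (n + 1)) * ENNReal.ofReal (y ^ 2) := by
        rw [← ENNReal.ofReal_mul (by positivity)]
        rw [ENNReal.one_le_ofReal]
        have hy2' : ((2 : ℝ) ^ (n + 1))⁻¹ ^ 2 ≤ y ^ 2 := by
          apply pow_le_pow_left₀ (by positivity) hy1.le
        have this4 : ((2 : ℝ) ^ (n + 1))⁻¹ ^ 2 = ((4 : ℝ) ^ (n + 1))⁻¹ := by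
          rw [inv_pow, ← pow_mul, mul_comm, pow_mul]; norm_num
        rw [this4] at hy2'
        have h4 : (0 : ℝ) < 4 ^ (n + 1) := by positivity
        calc (1 : ℝ) = 4 ^ (n + 1) * (4 ^ (n + 1))⁻¹ := by field_simp
          _ ≤ 4 ^ (n + 1) * y ^ 2 := mul_le_mul_of_nonneg_left hy2' h4.le
      calc (μ (Set.Icc (x - y) (x + y))) ^ 2 ≤ h n x := hnum
        _ = h n x * 1 := (mul_one _).symm
        _ ≤ h n x * (ENNReal.ofReal ((4 : ℝ) ^ (n + 1)) * ENNReal.ofReal (y ^ 2)) :=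
            mul_le_mul_right hone _
        _ = ENNReal.ofReal ((4 : ℝ) ^ (n + 1)) * h n x * ENNReal.ofReal (y ^ 2) := by ring
    calc ∫⁻ p in A ×ˢ T n, f p
        ≤ ∫⁻ p in A ×ˢ T n, ENNReal.ofReal ((4 : ℝ) ^ (n + 1)) * h n p.1 :=
          setLIntegral_mono (hmeas.comp measurable_fst) hbound
      _ = ∫⁻ x in A, ∫⁻ _ in T n, ENNReal.ofReal ((4 : ℝ) ^ (n + 1)) * h n x := by
          rw [Measure.volume_eq_prod, ← Measure.prod_restrict]
          exact lintegral_prod _ (hmeas.comp measurable_fst).aemeasurable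
      _ = ∫⁻ x in A, (ENNReal.ofReal ((4 : ℝ) ^ (n + 1)) * ENNReal.ofReal
            (((2 : ℝ) ^ n)⁻¹ - ((2 : ℝ) ^ (n + 1))⁻¹)) * h n x := by
          congr 1; ext x
          rw [lintegral_const, Measure.restrict_apply_univ, hT]
          dsimp only
          rw [Real.volume_Ioc]
          ring
      _ = (ENNReal.ofReal ((4 : ℝ) ^ (n + 1)) * ENNReal.ofReal
            (((2 : ℝ) ^ n)⁻¹ - ((2 : ℝ) ^ (n + 1))⁻¹)) * ∫⁻ x in A, h n x := by
          apply lintegral_const_mul' _ _ (by finiteness)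
      _ ≤ 2 ^ (n + 2) * ∫⁻ x in A, h n x := by
          apply mul_le_mul_left
          rw [← ENNReal.ofReal_mul (by positivity)]
          have : (4 : ℝ) ^ (n + 1) * (((2 : ℝ) ^ n)⁻¹ - ((2 : ℝ) ^ (n + 1))⁻¹)
              = 2 ^ (n + 1) := by
            have h1 : ((2:ℝ) ^ n)⁻¹ - ((2:ℝ) ^ (n+1))⁻¹ = ((2:ℝ) ^ (n+1))⁻¹ := by
              field_simp; ring
            rw [h1, show (4:ℝ) = 2 ^ 2 by norm_num, ← pow_mul]
            field_simp
            ring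
          rw [this, ENNReal.ofReal_pow (by norm_num), ENNReal.ofReal_ofNat]
          exact pow_le_pow_right' one_le_two (Nat.le_succ _)
  calc ∫⁻ p in A ×ˢ Set.Ioc (0 : ℝ) 1, f p
      ≤ ∫⁻ p in ⋃ n, A ×ˢ T n, f p := by
        apply lintegral_mono_set
        rw [← Set.prod_iUnion]
        exact Set.prod_mono_right hcover
    _ ≤ ∑' n : ℕ, ∫⁻ p in A ×ˢ T n, f p := lintegral_iUnion_le _ _
    _ ≤ ∑' n : ℕ, 2 ^ (n + 2) * ∫⁻ x in A, h n x := ENNReal.tsum_le_tsum hpiece
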